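/- For every subset J ⊆ {1,…,n} with |J| ≥ 2, all distinct i, j ∈ J, and every λ ∈ K^*, the group commutator [θ_{ij}(J), μ_{J∖j}(λ)] := θ_{ij}(J)·μ_{J∖j}(λ)·θ_{ij}(J)^{-1}·μ_{J∖j}(λ)^{-1} equals μ_J(λ^{-1}) in the group of units of 𝕊_n. -/

import Mathlib

set_option synthInstance.maxHeartbeats 1000000
set_option maxHeartbeats 1600000

open MvPolynomial

namespace SnAlg

noncomputable section

variable (K : Type*) [Field K] [CharZero K] (n : ℕ)

/-- The polynomial algebra `P_n = K[x_1,…,x_n]`. -/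
abbrev Poly := MvPolynomial (Fin n) K

/-- The operator `x_i` : multiplication by the variable `x_i`. -/
def xop (i : Fin n) : Module.End K (Poly K n) := LinearMap.mulLeft K (X i)

/-- The operator `y_i`, the one-sided inverse of `x_i`: it sends the monomial `x^α` to
`x^{α - e_i}` if `α_i > 0` and to `0` otherwise. -/
def yop (i : Fin n) : Module.End K (Poly K n) :=
  (MvPolynomial.basisMonomials (Fin n) K).constr K fun α =>
    if α i = 0 then 0
    else (MvPolynomial.basisMonomials (Fin n) K) (α - Finsupp.single i 1)

/-- The algebra `𝕊_n` of one-sided inverses of `P_n`: the subalgebra of `End_K(P_n)`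
generated by `x_1,…,x_n,y_1,…,y_n`. -/
def Sn : Subalgebra K (Module.End K (Poly K n)) :=
  Algebra.adjoin K (Set.range (xop K n) ∪ Set.range (yop K n))

/-- `x_i` as an element of `𝕊_n`. -/
def Xe (i : Fin n) : Sn K n :=
  ⟨xop K n i, Algebra.subset_adjoin (Set.mem_union_left _ ⟨i, rfl⟩)⟩

/-- `y_i` as an element of `𝕊_n`. -/
def Ye (i : Fin n) : Sn K n :=
  ⟨yop K n i, Algebra.subset_adjoin (Set.mem_union_right _ ⟨i, rfl⟩)⟩

/-- The two-sided ideal `𝔭_i` of `𝕊_n` generated by `1 - x_i y_i`. -/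
def pIdeal (i : Fin n) : TwoSidedIdeal (Sn K n) :=
  TwoSidedIdeal.span {1 - Xe K n i * Ye K n i}

/-- `e_J := ∏_{k ∈ J} (1 - x_k y_k)` (the factors pairwise commute; the product is taken in
increasing order of the indices). -/
def eSet (J : Finset (Fin n)) : Sn K n :=
  ((J.sort (· ≤ ·)).map fun k => 1 - Xe K n k * Ye K n k).prod

/-- `μ_J(a) := a e_J + 1 - e_J`. -/
def mu (J : Finset (Fin n)) (a : Sn K n) : Sn K n :=
  a * eSet K n J + 1 - eSet K n J

/-- `θ_{ij}(J) := μ_{J∖i}(y_i) · μ_{J∖j}(x_j)`. -/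
def theta (J : Finset (Fin n)) (i j : Fin n) : Sn K n :=
  mu K n (J.erase i) (Ye K n i) * mu K n (J.erase j) (Xe K n j)

/-- The factor `E_{kl}(i) = x_i^k y_i^l - x_i^{k+1} y_i^{l+1}`. -/
def Efac (i : Fin n) (k l : ℕ) : Sn K n :=
  Xe K n i ^ k * Ye K n i ^ l - Xe K n i ^ (k + 1) * Ye K n i ^ (l + 1)

/-- `E_{αβ} := ∏_{i=1}^n E_{α_i β_i}(i)`. -/
def Eab (α β : Fin n → ℕ) : Sn K n :=
  ((List.finRange n).map fun i => Efac K n i (α i) (β i)).prod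

/-- `F_n`, the `K`-linear span of all the `E_{αβ}`. -/
def Fn : Submodule K (Sn K n) :=
  Submodule.span K {f | ∃ α β : Fin n → ℕ, f = Eab K n α β}

/-- A `K`-linear map is Fredholm if its kernel and cokernel are finite dimensional. -/
def IsFredholm {V U : Type*} [AddCommGroup V] [Module K V] [AddCommGroup U] [Module K U]
    (f : V →ₗ[K] U) : Prop :=
  FiniteDimensional K (LinearMap.ker f) ∧ FiniteDimensional K (U ⧸ LinearMap.range f)

/-- The index of a (Fredholm) linear map: `dim ker - dim coker`. -/
def fredInd {V U : Type*} [AddCommGroup V] [Module K V] [AddCommGroup U] [Module K U]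
    (f : V →ₗ[K] U) : ℤ :=
  (Module.finrank K (LinearMap.ker f) : ℤ) - (Module.finrank K (U ⧸ LinearMap.range f) : ℤ)




/-! ### Auxiliary lemmas -/

lemma end_ext {f g : Module.End K (Poly K n)}
    (h : ∀ β : Fin n →₀ ℕ, f (monomial β (1 : K)) = g (monomial β (1 : K))) : f = g := by
  apply (MvPolynomial.basisMonomials (Fin n) K).ext
  intro β
  simpa [MvPolynomial.coe_basisMonomials] using h β

lemma yop_monomial (i : Fin n) (β : Fin n →₀ ℕ) :
    yop K n i (monomial β (1 : K)) =
      if β i = 0 then 0 else monomial (β - Finsupp.single i 1) (1 : K) := by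
  have h := (MvPolynomial.basisMonomials (Fin n) K).constr_basis K
    (fun α => if α i = 0 then (0 : Poly K n)
      else (MvPolynomial.basisMonomials (Fin n) K) (α - Finsupp.single i 1)) β
  simp only [MvPolynomial.coe_basisMonomials] at h
  simpa [yop, MvPolynomial.coe_basisMonomials] using h

lemma xop_monomial (i : Fin n) (β : Fin n →₀ ℕ) :
    xop K n i (monomial β (1 : K)) = monomial (β + Finsupp.single i 1) (1 : K) := by
  simp only [xop, LinearMap.mulLeft_apply]
  rw [X, monomial_mul, one_mul, add_comm]

lemma ye_xe (i : Fin n) : Ye K n i * Xe K n i = 1 := by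
  apply Subtype.ext
  simp only [MulMemClass.coe_mul, OneMemClass.coe_one, Ye, Xe]
  apply end_ext
  intro β
  rw [Module.End.mul_apply, xop_monomial, yop_monomial, Module.End.one_apply,
    if_neg (by simp [Finsupp.add_apply, Finsupp.single_eq_same])]
  rw [add_tsub_cancel_right]

lemma xe_comm (i j : Fin n) : Xe K n i * Xe K n j = Xe K n j * Xe K n i := by
  apply Subtype.ext
  simp only [MulMemClass.coe_mul, Xe]
  apply end_ext
  intro β
  rw [Module.End.mul_apply, Module.End.mul_apply, xop_monomial, xop_monomial,
    xop_monomial, xop_monomial, add_right_comm]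

lemma xe_ye_comm (i j : Fin n) (h : i ≠ j) :
    Xe K n i * Ye K n j = Ye K n j * Xe K n i := by
  apply Subtype.ext
  simp only [MulMemClass.coe_mul, Xe, Ye]
  apply end_ext
  intro β
  rw [Module.End.mul_apply, Module.End.mul_apply, xop_monomial, yop_monomial, yop_monomial]
  rcases eq_or_ne (β j) 0 with h0 | h0
  · rw [if_pos h0, map_zero, if_pos (by simp [Finsupp.add_apply, Finsupp.single_eq_of_ne (Ne.symm h), h0])]
  · rw [if_neg h0, xop_monomial,
      if_neg (by simp [Finsupp.add_apply, Finsupp.single_eq_of_ne h, h0])]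
    have hsw : β + Finsupp.single i 1 - Finsupp.single j 1
        = β - Finsupp.single j 1 + Finsupp.single i 1 := by
      ext k
      simp only [Finsupp.add_apply, Finsupp.tsub_apply, Finsupp.single_apply]
      rcases eq_or_ne i k with h1 | h1 <;> rcases eq_or_ne j k with h2 | h2
      · exact absurd (h1.trans h2.symm) h
      · rw [if_pos h1, if_neg h2]; omega
      · rw [if_neg h1, if_pos h2]; omega
      · rw [if_neg h1, if_neg h2]; omega
    rw [hsw]

lemma ye_ye_comm (i j : Fin n) : Ye K n i * Ye K n j = Ye K n j * Ye K n i := by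
  rcases eq_or_ne i j with rfl | h
  · rfl
  apply Subtype.ext
  simp only [MulMemClass.coe_mul, Ye]
  apply end_ext
  intro β
  rw [Module.End.mul_apply, Module.End.mul_apply, yop_monomial, yop_monomial]
  rcases eq_or_ne (β j) 0 with h0 | h0
  · rw [if_pos h0, map_zero]
    rcases eq_or_ne (β i) 0 with h1 | h1
    · rw [if_pos h1, map_zero]
    · rw [if_neg h1, yop_monomial,
        if_pos (by rw [Finsupp.tsub_apply, Finsupp.single_apply,
          if_neg (show ¬ i = j from h)]; omega)]
  · rw [if_neg h0, yop_monomial]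
    rcases eq_or_ne (β i) 0 with h1 | h1
    · rw [if_pos (by rw [Finsupp.tsub_apply, Finsupp.single_apply,
          if_neg (show ¬ j = i from Ne.symm h)]; omega), if_pos h1, map_zero]
    · rw [if_neg (by rw [Finsupp.tsub_apply, Finsupp.single_apply,
          if_neg (show ¬ j = i from Ne.symm h)]; omega), if_neg h1, yop_monomial,
        if_neg (by rw [Finsupp.tsub_apply, Finsupp.single_apply,
          if_neg (show ¬ i = j from h)]; omega)]
      rw [tsub_right_comm]

lemma eps_commute (k m : Fin n) :
    Commute (1 - Xe K n k * Ye K n k) (1 - Xe K n m * Ye K n m) := by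
  rcases eq_or_ne k m with rfl | h
  · exact Commute.refl _
  have cxx : Commute (Xe K n k) (Xe K n m) := xe_comm K n k m
  have cxy : Commute (Xe K n k) (Ye K n m) := xe_ye_comm K n k m h
  have cyx : Commute (Ye K n k) (Xe K n m) := (xe_ye_comm K n m k (Ne.symm h)).symm
  have cyy : Commute (Ye K n k) (Ye K n m) := ye_ye_comm K n k m
  have c1 : Commute (Xe K n k * Ye K n k) (Xe K n m * Ye K n m) :=
    (cxx.mul_right cxy).mul_left (cyx.mul_right cyy)
  exact (Commute.one_left _).sub_left (Commute.sub_right (R := Sn K n) (Commute.one_right _) c1)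

lemma commute_xe_eps (i m : Fin n) (h : i ≠ m) :
    Commute (Xe K n i) (1 - Xe K n m * Ye K n m) :=
  Commute.sub_right (R := Sn K n) (Commute.one_right _)
    ((show Commute (Xe K n i) (Xe K n m) from xe_comm K n i m).mul_right
      (show Commute (Xe K n i) (Ye K n m) from xe_ye_comm K n i m h))

lemma commute_ye_eps (i m : Fin n) (h : i ≠ m) :
    Commute (Ye K n i) (1 - Xe K n m * Ye K n m) :=
  Commute.sub_right (R := Sn K n) (Commute.one_right _)
    ((show Commute (Ye K n i) (Xe K n m) from (xe_ye_comm K n m i (Ne.symm h)).symm).mul_right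
      (show Commute (Ye K n i) (Ye K n m) from ye_ye_comm K n i m))

lemma pairwise_univ {α : Type*} {R : α → α → Prop} (h : ∀ a b, R a b) :
    ∀ l : List α, l.Pairwise R
  | [] => .nil
  | a :: t => .cons (fun b _ => h a b) (pairwise_univ h t)

lemma eSet_erase (J : Finset (Fin n)) (k : Fin n) (hk : k ∈ J) :
    eSet K n J = (1 - Xe K n k * Ye K n k) * eSet K n (J.erase k) := by
  have hperm : (J.sort (· ≤ ·)).Perm (k :: (J.erase k).sort (· ≤ ·)) := by
    rw [← Multiset.coe_eq_coe, ← Multiset.cons_coe, Finset.sort_eq, Finset.sort_eq,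
      Finset.erase_val]
    exact (Multiset.cons_erase (Finset.mem_def.mp hk)).symm
  have hmap := hperm.map (fun m => 1 - Xe K n m * Ye K n m)
  have hpw : ((J.sort (· ≤ ·)).map fun m => 1 - Xe K n m * Ye K n m).Pairwise Commute := by
    rw [List.pairwise_map]
    exact pairwise_univ (fun a b => eps_commute K n a b) _
  unfold eSet
  rw [hmap.prod_eq' hpw, List.map_cons, List.prod_cons]

lemma commute_xe_eSet (i : Fin n) (S : Finset (Fin n)) (h : i ∉ S) :
    Commute (Xe K n i) (eSet K n S) := by
  apply Commute.list_prod_right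
  intro x hx
  obtain ⟨m, hm, rfl⟩ := List.mem_map.mp hx
  exact commute_xe_eps K n i m
    (fun e => h (e ▸ (Finset.mem_sort (α := Fin n) (· ≤ ·)).mp hm))

lemma commute_ye_eSet (i : Fin n) (S : Finset (Fin n)) (h : i ∉ S) :
    Commute (Ye K n i) (eSet K n S) := by
  apply Commute.list_prod_right
  intro x hx
  obtain ⟨m, hm, rfl⟩ := List.mem_map.mp hx
  exact commute_ye_eps K n i m
    (fun e => h (e ▸ (Finset.mem_sort (α := Fin n) (· ≤ ·)).mp hm))

lemma eps_idem (k : Fin n) :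
    (1 - Xe K n k * Ye K n k) * (1 - Xe K n k * Ye K n k) = 1 - Xe K n k * Ye K n k := by
  have hp : (Xe K n k * Ye K n k) * (Xe K n k * Ye K n k) = Xe K n k * Ye K n k := by
    rw [mul_assoc, ← mul_assoc (Ye K n k), ye_xe, one_mul]
  have h := _root_.sub_mul (1 : Sn K n) (Xe K n k * Ye K n k) (1 - Xe K n k * Ye K n k)
  rw [h, one_mul, _root_.mul_sub (Xe K n k * Ye K n k) 1 (Xe K n k * Ye K n k),
    mul_one, hp, sub_self]
  exact sub_zero (1 - Xe K n k * Ye K n k : Sn K n)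

lemma list_eps_idem (l : List (Fin n)) :
    ((l.map fun m => 1 - Xe K n m * Ye K n m).prod) *
      ((l.map fun m => 1 - Xe K n m * Ye K n m).prod)
    = (l.map fun m => 1 - Xe K n m * Ye K n m).prod := by
  induction l with
  | nil => simp
  | cons a t ih =>
    simp only [List.map_cons, List.prod_cons]
    have hc : Commute (1 - Xe K n a * Ye K n a)
        ((t.map fun m => 1 - Xe K n m * Ye K n m).prod) := by
      apply Commute.list_prod_right
      intro x hx
      obtain ⟨m, hm, rfl⟩ := List.mem_map.mp hx
      exact eps_commute K n a m
    set p := (t.map fun m => 1 - Xe K n m * Ye K n m).prod with hp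
    set e := 1 - Xe K n a * Ye K n a with he
    calc (e * p) * (e * p) = e * ((p * e) * p) := by rw [mul_assoc, mul_assoc]
      _ = e * ((e * p) * p) := by rw [← hc.eq]
      _ = e * (e * (p * p)) := by rw [mul_assoc]
      _ = e * (e * p) := by rw [ih]
      _ = (e * e) * p := by rw [← mul_assoc]
      _ = e * p := by rw [eps_idem]

lemma eSet_idem (S : Finset (Fin n)) : eSet K n S * eSet K n S = eSet K n S :=
  list_eps_idem K n _

/-- The key abstract computation. -/
lemma key {R : Type*} [Ring R] (a b c d e f E l l' : R)
    (hba : b * a = 1) (hdc : d * c = 1)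
    (hab : a * b = 1 - e) (hcd : c * d = 1 - f)
    (hca : c * a = a * c) (hcb : c * b = b * c)
    (hda : d * a = a * d) (hdb : d * b = b * d)
    (hEa : E * a = a * E) (hEb : E * b = b * E)
    (hEc : E * c = c * E) (hEd : E * d = d * E)
    (hEE : E * E = E)
    (hl : ∀ x, l * x = x * l) (hl' : ∀ x, l' * x = x * l')
    (hll' : l * l' = 1) (hl'l : l' * l = 1) :
    (b * (f * E) + 1 - f * E) * (c * (e * E) + 1 - e * E) *
      (l * (e * E) + 1 - e * E) *
      ((d * (e * E) + 1 - e * E) * (a * (f * E) + 1 - f * E)) *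
      (l' * (e * E) + 1 - e * E)
    = l' * (e * (f * E)) + 1 - e * (f * E) := by
  have ext : ∀ {p q r : R}, p * q = r → ∀ x, p * (q * x) = r * x := by
    intro p q r h x; rw [← mul_assoc, h]
  have he : e = 1 - a * b := by rw [hab, sub_sub_cancel]
  have hf : f = 1 - c * d := by rw [hcd, sub_sub_cancel]
  have hea : e * a = 0 := by
    rw [he, sub_mul, one_mul, mul_assoc, hba, mul_one, sub_self]
  have hbe : b * e = 0 := by
    rw [he, mul_sub, mul_one, ← mul_assoc, hba, one_mul, sub_self]
  have hee : e * e = e := by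
    nth_rewrite 2 [he]
    rw [mul_sub, mul_one, ← mul_assoc, hea, zero_mul, sub_zero]
  have hfc : f * c = 0 := by
    rw [hf, sub_mul, one_mul, mul_assoc, hdc, mul_one, sub_self]
  have hdf : d * f = 0 := by
    rw [hf, mul_sub, mul_one, ← mul_assoc, hdc, one_mul, sub_self]
  have hff : f * f = f := by
    nth_rewrite 2 [hf]
    rw [mul_sub, mul_one, ← mul_assoc, hfc, zero_mul, sub_zero]
  have comm_e : ∀ x : R, Commute x a → Commute x b → Commute x e := fun x hxa hxb =>
    he ▸ ((Commute.one_right x).sub_right (hxa.mul_right hxb))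
  have comm_f : ∀ x : R, Commute x c → Commute x d → Commute x f := fun x hxc hxd =>
    hf ▸ ((Commute.one_right x).sub_right (hxc.mul_right hxd))
  have Cca : Commute c a := hca
  have Ccb : Commute c b := hcb
  have Cda : Commute d a := hda
  have Cdb : Commute d b := hdb
  have CEa : Commute E a := hEa
  have CEb : Commute E b := hEb
  have CEc : Commute E c := hEc
  have CEd : Commute E d := hEd
  have Cfa : Commute f a := (comm_f a Cca.symm Cda.symm).symm
  have Cfb : Commute f b := (comm_f b Ccb.symm Cdb.symm).symm
  have hce : c * e = e * c := comm_e c Cca Ccb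
  have hde : d * e = e * d := comm_e d Cda Cdb
  have hfa : f * a = a * f := Cfa
  have hfb : f * b = b * f := Cfb
  have hfe : f * e = e * f := comm_e f Cfa Cfb
  have hEe : E * e = e * E := comm_e E CEa CEb
  have hEf : E * f = f * E := comm_f E CEc CEd
  -- scalar movement rules
  have hal : a * l = l * a := (hl a).symm
  have hbl : b * l = l * b := (hl b).symm
  have hcl : c * l = l * c := (hl c).symm
  have hdl : d * l = l * d := (hl d).symm
  have hel : e * l = l * e := (hl e).symm
  have hfl : f * l = l * f := (hl f).symm
  have hEl : E * l = l * E := (hl E).symm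
  have hal' : a * l' = l' * a := (hl' a).symm
  have hbl' : b * l' = l' * b := (hl' b).symm
  have hcl' : c * l' = l' * c := (hl' c).symm
  have hdl' : d * l' = l' * d := (hl' d).symm
  have hel' : e * l' = l' * e := (hl' e).symm
  have hfl' : f * l' = l' * f := (hl' f).symm
  have hEl' : E * l' = l' * E := (hl' E).symm
  simp only [mul_add, add_mul, mul_sub, sub_mul, mul_one, one_mul, mul_assoc,
    ext hba, ext hdc, ext hab, ext hcd, ext hea, ext hbe, ext hee, ext hfc, ext hdf, ext hff,
    ext hca, ext hcb, ext hda, ext hdb, ext hce, ext hde, ext hfa, ext hfb, ext hfe,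
    ext hEa, ext hEb, ext hEc, ext hEd, ext hEe, ext hEf, ext hEE,
    ext hal, ext hbl, ext hcl, ext hdl, ext hel, ext hfl, ext hEl,
    ext hal', ext hbl', ext hcl', ext hdl', ext hel', ext hfl', ext hEl',
    ext hll', ext hl'l,
    hba, hdc, hab, hcd, hea, hbe, hee, hfc, hdf, hff,
    hca, hcb, hda, hdb, hce, hde, hfa, hfb, hfe,
    hEa, hEb, hEc, hEd, hEe, hEf, hEE,
    hal, hbl, hcl, hdl, hel, hfl, hEl,
    hal', hbl', hcl', hdl', hel', hfl', hEl',
    hll', hl'l,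
    zero_mul, mul_zero, add_zero, zero_add, sub_zero, zero_sub, neg_neg]
  abel


/-- For `|J| ≥ 2`, distinct `i, j ∈ J` and `λ ∈ K^*`, the group commutator
`[θ_{ij}(J), μ_{J∖j}(λ)] = θ_{ij}(J)·μ_{J∖j}(λ)·θ_{ij}(J)⁻¹·μ_{J∖j}(λ)⁻¹` equals `μ_J(λ⁻¹)`
(recall `θ_{ij}(J)⁻¹ = θ_{ji}(J)` and `μ_{J∖j}(λ)⁻¹ = μ_{J∖j}(λ⁻¹)`). -/
theorem theta_mu_commutator (hn : 2 ≤ n) (J : Finset (Fin n)) (hJ : 2 ≤ J.card)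
    (i j : Fin n) (hi : i ∈ J) (hj : j ∈ J) (hij : i ≠ j) (lam : K) (hlam : lam ≠ 0) :
    theta K n J i j * mu K n (J.erase j) (algebraMap K (Sn K n) lam) *
      theta K n J j i * mu K n (J.erase j) (algebraMap K (Sn K n) lam⁻¹) =
    mu K n J (algebraMap K (Sn K n) lam⁻¹) := by
  classical
  have hji : j ∈ J.erase i := Finset.mem_erase.2 ⟨Ne.symm hij, hj⟩
  have hij' : i ∈ J.erase j := Finset.mem_erase.2 ⟨hij, hi⟩
  have h1 : eSet K n (J.erase i)
      = (1 - Xe K n j * Ye K n j) * eSet K n ((J.erase i).erase j) :=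
    eSet_erase K n (J.erase i) j hji
  have h2 : eSet K n (J.erase j)
      = (1 - Xe K n i * Ye K n i) * eSet K n ((J.erase i).erase j) := by
    rw [eSet_erase K n (J.erase j) i hij', Finset.erase_right_comm]
  have h3 : eSet K n J = (1 - Xe K n i * Ye K n i) *
      ((1 - Xe K n j * Ye K n j) * eSet K n ((J.erase i).erase j)) := by
    rw [eSet_erase K n J i hi, h1]
  have hiE : i ∉ (J.erase i).erase j := fun hmem =>
    Finset.notMem_erase i J (Finset.mem_of_mem_erase hmem)
  have hjE : j ∉ (J.erase i).erase j := Finset.notMem_erase j _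
  simp only [theta, mu, h1, h2, h3]
  exact key (Xe K n i) (Ye K n i) (Xe K n j) (Ye K n j)
    (1 - Xe K n i * Ye K n i) (1 - Xe K n j * Ye K n j)
    (eSet K n ((J.erase i).erase j))
    (algebraMap K (Sn K n) lam) (algebraMap K (Sn K n) lam⁻¹)
    (ye_xe K n i) (ye_xe K n j)
    ((sub_sub_cancel 1 (Xe K n i * Ye K n i)).symm)
    ((sub_sub_cancel 1 (Xe K n j * Ye K n j)).symm)
    (xe_comm K n j i) (xe_ye_comm K n j i (Ne.symm hij))
    ((xe_ye_comm K n i j hij).symm) (ye_ye_comm K n j i)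
    ((commute_xe_eSet K n i _ hiE).eq.symm) ((commute_ye_eSet K n i _ hiE).eq.symm)
    ((commute_xe_eSet K n j _ hjE).eq.symm) ((commute_ye_eSet K n j _ hjE).eq.symm)
    (eSet_idem K n _)
    (fun x => Algebra.commutes lam x) (fun x => Algebra.commutes lam⁻¹ x)
    (by rw [← map_mul, mul_inv_cancel₀ hlam, map_one])
    (by rw [← map_mul, inv_mul_cancel₀ hlam, map_one])

end

end SnAlg
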